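/- For every m ∈ ℕ, κ₁, κ₂ ≥ 0 and x₁, x₂ ∈ ℝ, the integral ∫_ℝ |y|^m exp(κ₁(x₁-y) + κ₂(y-x₂) - e^{x₁-y} - e^{y-x₂}) dy is bounded by P(|x₁|,|x₂|) · exp(([(κ₁+κ₂)(x₁-x₂)/2 - e^{(x₁-x₂)/2}]) · θ(x₁-x₂)), where P is a polynomial in |x₁| and |x₂| depending on m, κ₁, κ₂, and θ is the Heaviside step function. -/

import Mathlib

open MeasureTheory Set Real

-- coefficient nonnegativity helpers
lemma coeff_nonneg_mul {p q : MvPolynomial (Fin 2) ℝ}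
    (hp : ∀ d, 0 ≤ p.coeff d) (hq : ∀ d, 0 ≤ q.coeff d) :
    ∀ d, 0 ≤ (p * q).coeff d := by
  intro d
  classical
  rw [MvPolynomial.coeff_mul]
  exact Finset.sum_nonneg fun x _ => mul_nonneg (hp _) (hq _)

lemma coeff_nonneg_pow {p : MvPolynomial (Fin 2) ℝ}
    (hp : ∀ d, 0 ≤ p.coeff d) (n : ℕ) : ∀ d, 0 ≤ (p ^ n).coeff d := by
  induction n with
  | zero =>
    intro d
    classical
    rw [pow_zero, MvPolynomial.coeff_one]
    split <;> norm_num
  | succ k ih => rw [pow_succ]; exact coeff_nonneg_mul ih hp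

lemma exp_quad (μ u : ℝ) (hμ : 0 ≤ μ) (hu : 0 ≤ u) :
    μ * u - Real.exp u / 2 ≤ 2 * μ ^ 2 := by
  have h1 : 1 + u / 2 ≤ Real.exp (u / 2) := by
    have := Real.add_one_le_exp (u / 2); linarith
  have h2 : Real.exp (u / 2) * Real.exp (u / 2) = Real.exp u := by
    rw [← Real.exp_add]; ring_nf
  have h3 : (1 + u / 2) ^ 2 ≤ Real.exp u := by
    nlinarith [Real.exp_pos (u / 2)]
  nlinarith [sq_nonneg (u - 4 * μ)]

lemma pow_exp_bound (m : ℕ) (κ u : ℝ) (hκ : 0 ≤ κ) (hu : 0 ≤ u) :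
    (1 + u) ^ m * Real.exp (κ * u - Real.exp u / 2)
      ≤ Real.exp (2 * ((m : ℝ) + κ + 1) ^ 2) * Real.exp (-u) := by
  have h1 : (1 + u) ^ m ≤ Real.exp ((m : ℝ) * u) := by
    have : (1 + u) ≤ Real.exp u := by have := Real.add_one_le_exp u; linarith
    calc (1 + u) ^ m ≤ (Real.exp u) ^ m := pow_le_pow_left₀ (by linarith) this m
      _ = Real.exp ((m : ℝ) * u) := by rw [← Real.exp_nat_mul]
  calc (1 + u) ^ m * Real.exp (κ * u - Real.exp u / 2)
      ≤ Real.exp ((m : ℝ) * u) * Real.exp (κ * u - Real.exp u / 2) := by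
        apply mul_le_mul_of_nonneg_right h1 (Real.exp_pos _).le
    _ = Real.exp (((m : ℝ) + κ + 1) * u - Real.exp u / 2 + (-u)) := by
        rw [← Real.exp_add]; ring_nf
    _ ≤ Real.exp (2 * ((m : ℝ) + κ + 1) ^ 2) * Real.exp (-u) := by
        rw [← Real.exp_add]
        apply Real.exp_le_exp.mpr
        have := exp_quad ((m : ℝ) + κ + 1) u (by positivity) hu
        linarith

lemma oneSidedIci (m : ℕ) (κ : ℝ) (hκ : 0 ≤ κ) :
    ∃ C : ℝ, 0 ≤ C ∧ ∀ a x : ℝ,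
      IntegrableOn (fun y => |y| ^ m * Real.exp (κ * (y - x) - Real.exp (y - x) / 2)) (Ici a) ∧
      (∫ y in Ici a, |y| ^ m * Real.exp (κ * (y - x) - Real.exp (y - x) / 2))
        ≤ C * ((1 + |x|) ^ m * (1 + |a| + |x|) ^ (m + 1)) := by
  set C₀ : ℝ := 2 * ((m : ℝ) + κ + 1) ^ 2 with hC₀
  refine ⟨Real.exp C₀ + 1, by positivity, fun a x => ?_⟩
  set F : ℝ → ℝ := fun y => |y| ^ m * Real.exp (κ * (y - x) - Real.exp (y - x) / 2) with hF
  set H : ℝ → ℝ := fun y =>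
    (1 + |x|) ^ m * (Set.indicator (Ici x) (fun y => Real.exp C₀ * Real.exp (x - y)) y
      + Set.indicator (Icc a x) (fun _ => (1 + |a| + |x|) ^ m) y) with hH
  have hH1 : Integrable (Set.indicator (Ici x) (fun y => Real.exp C₀ * Real.exp (x - y))) := by
    rw [integrable_indicator_iff measurableSet_Ici]
    have h1 : IntegrableOn (fun y : ℝ => Real.exp (-y)) (Ioi x) := by
      simpa using exp_neg_integrableOn_Ioi x one_pos
    have h2 : IntegrableOn (fun y : ℝ => Real.exp (-y)) (Ici x) := by
      rwa [integrableOn_Ici_iff_integrableOn_Ioi]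
    have key : (fun y : ℝ => Real.exp C₀ * Real.exp (x - y))
        = fun y => (Real.exp C₀ * Real.exp x) * Real.exp (-y) := by
      funext y; rw [Real.exp_neg, Real.exp_sub]; ring
    rw [key]
    exact h2.const_mul _
  have hH2 : Integrable (Set.indicator (Icc a x) (fun _ : ℝ => (1 + |a| + |x|) ^ m)) := by
    rw [integrable_indicator_iff measurableSet_Icc]
    exact integrableOn_const measure_Icc_lt_top.ne
  have hHint : Integrable H := (hH1.add hH2).const_mul _
  have hHnn : ∀ y, 0 ≤ H y := by
    intro y
    apply mul_nonneg (by positivity)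
    apply add_nonneg
    · exact Set.indicator_nonneg (fun y _ => by positivity) y
    · exact Set.indicator_nonneg (fun y _ => by positivity) y
  have hFnn : ∀ y, 0 ≤ F y := fun y => by simp only [hF]; positivity
  have habs : ∀ y : ℝ, |y| ^ m ≤ (1 + |x|) ^ m * (1 + |y - x|) ^ m := by
    intro y
    rw [← mul_pow]
    apply pow_le_pow_left₀ (abs_nonneg y)
    have h1 : |y| ≤ |y - x| + |x| := by
      calc |y| = |(y - x) + x| := by ring_nf
        _ ≤ |y - x| + |x| := abs_add_le _ _
    nlinarith [abs_nonneg (y - x), abs_nonneg x]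
  have hFH : ∀ y ∈ Ici a, F y ≤ H y := by
    intro y hy
    simp only [mem_Ici] at hy
    rcases le_or_gt x y with hxy | hxy
    · -- y ≥ x
      have hu : 0 ≤ y - x := by linarith
      have h1 : F y ≤ (1 + |x|) ^ m * ((1 + (y - x)) ^ m * Real.exp (κ * (y - x) - Real.exp (y - x) / 2)) := by
        simp only [hF]
        rw [← mul_assoc]
        apply mul_le_mul_of_nonneg_right ?_ (Real.exp_pos _).le
        have := habs y
        rwa [abs_of_nonneg hu] at this
      have h2 : (1 + (y - x)) ^ m * Real.exp (κ * (y - x) - Real.exp (y - x) / 2)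
          ≤ Real.exp C₀ * Real.exp (x - y) := by
        have := pow_exp_bound m κ (y - x) hκ hu
        rw [hC₀]
        convert this using 3
        ring
      have h3 : H y ≥ (1 + |x|) ^ m * (Real.exp C₀ * Real.exp (x - y)) := by
        simp only [hH]
        apply mul_le_mul_of_nonneg_left ?_ (by positivity)
        rw [Set.indicator_of_mem (mem_Ici.mpr hxy)]
        have := Set.indicator_nonneg (s := Icc a x) (f := fun _ : ℝ => (1 + |a| + |x|) ^ m)
          (fun z _ => by positivity) y
        linarith
      calc F y ≤ (1 + |x|) ^ m * ((1 + (y - x)) ^ m * Real.exp (κ * (y - x) - Real.exp (y - x) / 2)) := h1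
        _ ≤ (1 + |x|) ^ m * (Real.exp C₀ * Real.exp (x - y)) :=
            mul_le_mul_of_nonneg_left h2 (by positivity)
        _ ≤ H y := h3
    · -- a ≤ y < x
      have h1 : F y ≤ (1 + |x|) ^ m * (1 + |a| + |x|) ^ m := by
        simp only [hF]
        have he : Real.exp (κ * (y - x) - Real.exp (y - x) / 2) ≤ 1 := by
          rw [← Real.exp_zero]
          apply Real.exp_le_exp.mpr
          have : κ * (y - x) ≤ 0 := mul_nonpos_of_nonneg_of_nonpos hκ (by linarith)
          have := (Real.exp_pos (y - x)).le
          linarith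
        have h2 : |y| ^ m ≤ (1 + |x|) ^ m * (1 + |a| + |x|) ^ m := by
          calc |y| ^ m ≤ (1 + |x|) ^ m * (1 + |y - x|) ^ m := habs y
            _ ≤ (1 + |x|) ^ m * (1 + |a| + |x|) ^ m := by
                apply mul_le_mul_of_nonneg_left ?_ (by positivity)
                apply pow_le_pow_left₀ (by positivity)
                have : |y - x| = x - y := by rw [abs_of_nonpos (by linarith)]; ring
                rw [this]
                have h3 : -a ≤ |a| := neg_le_abs a
                have h4 : x ≤ |x| := le_abs_self x
                linarith
        calc |y| ^ m * Real.exp (κ * (y - x) - Real.exp (y - x) / 2)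
            ≤ |y| ^ m * 1 := mul_le_mul_of_nonneg_left he (by positivity)
          _ = |y| ^ m := mul_one _
          _ ≤ (1 + |x|) ^ m * (1 + |a| + |x|) ^ m := h2
      have h3 : H y ≥ (1 + |x|) ^ m * (1 + |a| + |x|) ^ m := by
        simp only [hH]
        apply mul_le_mul_of_nonneg_left ?_ (by positivity)
        rw [Set.indicator_of_mem (mem_Icc.mpr ⟨hy, hxy.le⟩)]
        have := Set.indicator_nonneg (s := Ici x) (f := fun z : ℝ => Real.exp C₀ * Real.exp (x - z))
          (fun z _ => by positivity) y
        linarith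
      linarith
  have hFmeas : AEStronglyMeasurable F (volume.restrict (Ici a)) := by
    apply Continuous.aestronglyMeasurable
    fun_prop
  have hFint : IntegrableOn F (Ici a) := by
    apply Integrable.mono' (hHint.restrict) hFmeas
    filter_upwards [ae_restrict_mem measurableSet_Ici] with y hy
    rw [Real.norm_eq_abs, abs_of_nonneg (hFnn y)]
    exact hFH y hy
  refine ⟨hFint, ?_⟩
  have step1 : (∫ y in Ici a, F y) ≤ ∫ y in Ici a, H y :=
    setIntegral_mono_on hFint hHint.integrableOn measurableSet_Ici hFH
  have step2 : (∫ y in Ici a, H y) ≤ ∫ y, H y :=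
    setIntegral_le_integral hHint (ae_of_all _ hHnn)
  have hval1 : (∫ y, Set.indicator (Ici x) (fun y => Real.exp C₀ * Real.exp (x - y)) y) = Real.exp C₀ := by
    rw [integral_indicator measurableSet_Ici]
    have key : ∀ y : ℝ, Real.exp C₀ * Real.exp (x - y) = (Real.exp C₀ * Real.exp x) * Real.exp (-y) := by
      intro y; rw [Real.exp_neg, Real.exp_sub]; ring
    simp_rw [key]
    rw [integral_const_mul, integral_Ici_eq_integral_Ioi, integral_exp_neg_Ioi]
    rw [← Real.exp_add, ← Real.exp_add]
    ring_nf
  have hval2 : (∫ y, Set.indicator (Icc a x) (fun _ : ℝ => (1 + |a| + |x|) ^ m) y)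
      ≤ (1 + |a| + |x|) ^ m * (|a| + |x|) := by
    rw [integral_indicator measurableSet_Icc, setIntegral_const, smul_eq_mul]
    rw [measureReal_def, Real.volume_Icc]
    have hle : (ENNReal.ofReal (x - a)).toReal ≤ |a| + |x| := by
      rcases le_total (x - a) 0 with h | h
      · rw [ENNReal.ofReal_eq_zero.mpr h]
        simp only [ENNReal.toReal_zero]
        positivity
      · rw [ENNReal.toReal_ofReal h]
        have h3 : -a ≤ |a| := neg_le_abs a
        have h4 : x ≤ |x| := le_abs_self x
        linarith
    have hp : (0:ℝ) ≤ (1 + |a| + |x|) ^ m := by positivity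
    nlinarith
  have step3 : (∫ y, H y) ≤ (1 + |x|) ^ m * (Real.exp C₀ + (1 + |a| + |x|) ^ m * (|a| + |x|)) := by
    simp only [hH]
    rw [integral_const_mul, integral_add hH1 hH2, hval1]
    apply mul_le_mul_of_nonneg_left ?_ (by positivity)
    linarith
  have step4 : (1 + |x|) ^ m * (Real.exp C₀ + (1 + |a| + |x|) ^ m * (|a| + |x|))
      ≤ (Real.exp C₀ + 1) * ((1 + |x|) ^ m * (1 + |a| + |x|) ^ (m + 1)) := by
    have hb : (1:ℝ) ≤ 1 + |a| + |x| := by linarith [abs_nonneg a, abs_nonneg x]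
    have h1 : (1:ℝ) ≤ (1 + |a| + |x|) ^ (m + 1) := by
      calc (1:ℝ) = 1 ^ (m + 1) := (one_pow _).symm
        _ ≤ (1 + |a| + |x|) ^ (m + 1) := pow_le_pow_left₀ one_pos.le hb _
    have h2 : (1 + |a| + |x|) ^ m * (|a| + |x|) ≤ (1 + |a| + |x|) ^ (m + 1) := by
      rw [pow_succ]
      apply mul_le_mul_of_nonneg_left (by linarith) (by positivity)
    have h3 : (0:ℝ) ≤ (1 + |x|) ^ m := by positivity
    have e1 : (1 + |x|) ^ m * ((1 + |a| + |x|) ^ m * (|a| + |x|))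
        ≤ (1 + |x|) ^ m * (1 + |a| + |x|) ^ (m + 1) := mul_le_mul_of_nonneg_left h2 h3
    have e2 : (1 + |x|) ^ m * Real.exp C₀ ≤ (1 + |x|) ^ m * Real.exp C₀ * (1 + |a| + |x|) ^ (m + 1) :=
      le_mul_of_one_le_right (by positivity) h1
    nlinarith
  calc (∫ y in Ici a, F y) ≤ ∫ y, H y := le_trans step1 step2
    _ ≤ (1 + |x|) ^ m * (Real.exp C₀ + (1 + |a| + |x|) ^ m * (|a| + |x|)) := step3
    _ ≤ (Real.exp C₀ + 1) * ((1 + |x|) ^ m * (1 + |a| + |x|) ^ (m + 1)) := step4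

lemma oneSidedIic (m : ℕ) (κ : ℝ) (hκ : 0 ≤ κ) :
    ∃ C : ℝ, 0 ≤ C ∧ ∀ a x : ℝ,
      IntegrableOn (fun y => |y| ^ m * Real.exp (κ * (x - y) - Real.exp (x - y) / 2)) (Iic a) ∧
      (∫ y in Iic a, |y| ^ m * Real.exp (κ * (x - y) - Real.exp (x - y) / 2))
        ≤ C * ((1 + |x|) ^ m * (1 + |a| + |x|) ^ (m + 1)) := by
  set C₀ : ℝ := 2 * ((m : ℝ) + κ + 1) ^ 2 with hC₀
  refine ⟨Real.exp C₀ + 1, by positivity, fun a x => ?_⟩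
  set F : ℝ → ℝ := fun y => |y| ^ m * Real.exp (κ * (x - y) - Real.exp (x - y) / 2) with hF
  set H : ℝ → ℝ := fun y =>
    (1 + |x|) ^ m * (Set.indicator (Iic x) (fun y => Real.exp C₀ * Real.exp (y - x)) y
      + Set.indicator (Icc x a) (fun _ => (1 + |a| + |x|) ^ m) y) with hH
  have hH1 : Integrable (Set.indicator (Iic x) (fun y => Real.exp C₀ * Real.exp (y - x))) := by
    rw [integrable_indicator_iff measurableSet_Iic]
    have h2 : IntegrableOn (fun y : ℝ => Real.exp y) (Iic x) := integrableOn_exp_Iic x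
    have key : (fun y : ℝ => Real.exp C₀ * Real.exp (y - x))
        = fun y => (Real.exp C₀ * Real.exp (-x)) * Real.exp y := by
      funext y; rw [Real.exp_neg, Real.exp_sub]; ring
    rw [key]
    exact h2.const_mul _
  have hH2 : Integrable (Set.indicator (Icc x a) (fun _ : ℝ => (1 + |a| + |x|) ^ m)) := by
    rw [integrable_indicator_iff measurableSet_Icc]
    exact integrableOn_const measure_Icc_lt_top.ne
  have hHint : Integrable H := (hH1.add hH2).const_mul _
  have hHnn : ∀ y, 0 ≤ H y := by
    intro y
    apply mul_nonneg (by positivity)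
    apply add_nonneg
    · exact Set.indicator_nonneg (fun y _ => by positivity) y
    · exact Set.indicator_nonneg (fun y _ => by positivity) y
  have hFnn : ∀ y, 0 ≤ F y := fun y => by simp only [hF]; positivity
  have habs : ∀ y : ℝ, |y| ^ m ≤ (1 + |x|) ^ m * (1 + |x - y|) ^ m := by
    intro y
    rw [← mul_pow]
    apply pow_le_pow_left₀ (abs_nonneg y)
    have h1 : |y| ≤ |x - y| + |x| := by
      calc |y| = |x - (x - y)| := by ring_nf
        _ ≤ |x| + |x - y| := abs_sub _ _
        _ = |x - y| + |x| := by ring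
    nlinarith [abs_nonneg (x - y), abs_nonneg x]
  have hFH : ∀ y ∈ Iic a, F y ≤ H y := by
    intro y hy
    simp only [mem_Iic] at hy
    rcases le_or_gt y x with hxy | hxy
    · -- y ≤ x
      have hu : 0 ≤ x - y := by linarith
      have h1 : F y ≤ (1 + |x|) ^ m * ((1 + (x - y)) ^ m * Real.exp (κ * (x - y) - Real.exp (x - y) / 2)) := by
        simp only [hF]
        rw [← mul_assoc]
        apply mul_le_mul_of_nonneg_right ?_ (Real.exp_pos _).le
        have := habs y
        rwa [abs_of_nonneg hu] at this
      have h2 : (1 + (x - y)) ^ m * Real.exp (κ * (x - y) - Real.exp (x - y) / 2)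
          ≤ Real.exp C₀ * Real.exp (y - x) := by
        have := pow_exp_bound m κ (x - y) hκ hu
        rw [hC₀]
        convert this using 3
        ring
      have h3 : H y ≥ (1 + |x|) ^ m * (Real.exp C₀ * Real.exp (y - x)) := by
        simp only [hH]
        apply mul_le_mul_of_nonneg_left ?_ (by positivity)
        rw [Set.indicator_of_mem (mem_Iic.mpr hxy)]
        have := Set.indicator_nonneg (s := Icc x a) (f := fun _ : ℝ => (1 + |a| + |x|) ^ m)
          (fun z _ => by positivity) y
        linarith
      calc F y ≤ (1 + |x|) ^ m * ((1 + (x - y)) ^ m * Real.exp (κ * (x - y) - Real.exp (x - y) / 2)) := h1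
        _ ≤ (1 + |x|) ^ m * (Real.exp C₀ * Real.exp (y - x)) :=
            mul_le_mul_of_nonneg_left h2 (by positivity)
        _ ≤ H y := h3
    · -- x < y ≤ a
      have h1 : F y ≤ (1 + |x|) ^ m * (1 + |a| + |x|) ^ m := by
        simp only [hF]
        have he : Real.exp (κ * (x - y) - Real.exp (x - y) / 2) ≤ 1 := by
          rw [← Real.exp_zero]
          apply Real.exp_le_exp.mpr
          have : κ * (x - y) ≤ 0 := mul_nonpos_of_nonneg_of_nonpos hκ (by linarith)
          have := (Real.exp_pos (x - y)).le
          linarith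
        have h2 : |y| ^ m ≤ (1 + |x|) ^ m * (1 + |a| + |x|) ^ m := by
          calc |y| ^ m ≤ (1 + |x|) ^ m * (1 + |x - y|) ^ m := habs y
            _ ≤ (1 + |x|) ^ m * (1 + |a| + |x|) ^ m := by
                apply mul_le_mul_of_nonneg_left ?_ (by positivity)
                apply pow_le_pow_left₀ (by positivity)
                have : |x - y| = y - x := by rw [abs_of_nonpos (by linarith)]; ring
                rw [this]
                have h3 : a ≤ |a| := le_abs_self a
                have h4 : -x ≤ |x| := neg_le_abs x
                linarith
        calc |y| ^ m * Real.exp (κ * (x - y) - Real.exp (x - y) / 2)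
            ≤ |y| ^ m * 1 := mul_le_mul_of_nonneg_left he (by positivity)
          _ = |y| ^ m := mul_one _
          _ ≤ (1 + |x|) ^ m * (1 + |a| + |x|) ^ m := h2
      have h3 : H y ≥ (1 + |x|) ^ m * (1 + |a| + |x|) ^ m := by
        simp only [hH]
        apply mul_le_mul_of_nonneg_left ?_ (by positivity)
        rw [Set.indicator_of_mem (mem_Icc.mpr ⟨hxy.le, hy⟩)]
        have := Set.indicator_nonneg (s := Iic x) (f := fun z : ℝ => Real.exp C₀ * Real.exp (z - x))
          (fun z _ => by positivity) y
        linarith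
      linarith
  have hFmeas : AEStronglyMeasurable F (volume.restrict (Iic a)) := by
    apply Continuous.aestronglyMeasurable
    fun_prop
  have hFint : IntegrableOn F (Iic a) := by
    apply Integrable.mono' (hHint.restrict) hFmeas
    filter_upwards [ae_restrict_mem measurableSet_Iic] with y hy
    rw [Real.norm_eq_abs, abs_of_nonneg (hFnn y)]
    exact hFH y hy
  refine ⟨hFint, ?_⟩
  have step1 : (∫ y in Iic a, F y) ≤ ∫ y in Iic a, H y :=
    setIntegral_mono_on hFint hHint.integrableOn measurableSet_Iic hFH
  have step2 : (∫ y in Iic a, H y) ≤ ∫ y, H y :=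
    setIntegral_le_integral hHint (ae_of_all _ hHnn)
  have hval1 : (∫ y, Set.indicator (Iic x) (fun y => Real.exp C₀ * Real.exp (y - x)) y) = Real.exp C₀ := by
    rw [integral_indicator measurableSet_Iic]
    have key : ∀ y : ℝ, Real.exp C₀ * Real.exp (y - x) = (Real.exp C₀ * Real.exp (-x)) * Real.exp y := by
      intro y; rw [Real.exp_neg, Real.exp_sub]; ring
    simp_rw [key]
    rw [integral_const_mul, integral_exp_Iic]
    rw [← Real.exp_add, ← Real.exp_add]
    ring_nf
  have hval2 : (∫ y, Set.indicator (Icc x a) (fun _ : ℝ => (1 + |a| + |x|) ^ m) y)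
      ≤ (1 + |a| + |x|) ^ m * (|a| + |x|) := by
    rw [integral_indicator measurableSet_Icc, setIntegral_const, smul_eq_mul]
    rw [measureReal_def, Real.volume_Icc]
    have hle : (ENNReal.ofReal (a - x)).toReal ≤ |a| + |x| := by
      rcases le_total (a - x) 0 with h | h
      · rw [ENNReal.ofReal_eq_zero.mpr h]
        simp only [ENNReal.toReal_zero]
        positivity
      · rw [ENNReal.toReal_ofReal h]
        have h3 : a ≤ |a| := le_abs_self a
        have h4 : -x ≤ |x| := neg_le_abs x
        linarith
    have hp : (0:ℝ) ≤ (1 + |a| + |x|) ^ m := by positivity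
    nlinarith
  have step3 : (∫ y, H y) ≤ (1 + |x|) ^ m * (Real.exp C₀ + (1 + |a| + |x|) ^ m * (|a| + |x|)) := by
    simp only [hH]
    rw [integral_const_mul, integral_add hH1 hH2, hval1]
    apply mul_le_mul_of_nonneg_left ?_ (by positivity)
    linarith
  have step4 : (1 + |x|) ^ m * (Real.exp C₀ + (1 + |a| + |x|) ^ m * (|a| + |x|))
      ≤ (Real.exp C₀ + 1) * ((1 + |x|) ^ m * (1 + |a| + |x|) ^ (m + 1)) := by
    have hb : (1:ℝ) ≤ 1 + |a| + |x| := by linarith [abs_nonneg a, abs_nonneg x]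
    have h1 : (1:ℝ) ≤ (1 + |a| + |x|) ^ (m + 1) := by
      calc (1:ℝ) = 1 ^ (m + 1) := (one_pow _).symm
        _ ≤ (1 + |a| + |x|) ^ (m + 1) := pow_le_pow_left₀ one_pos.le hb _
    have h2 : (1 + |a| + |x|) ^ m * (|a| + |x|) ≤ (1 + |a| + |x|) ^ (m + 1) := by
      rw [pow_succ]
      apply mul_le_mul_of_nonneg_left (by linarith) (by positivity)
    have h3 : (0:ℝ) ≤ (1 + |x|) ^ m := by positivity
    have e1 : (1 + |x|) ^ m * ((1 + |a| + |x|) ^ m * (|a| + |x|))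
        ≤ (1 + |x|) ^ m * (1 + |a| + |x|) ^ (m + 1) := mul_le_mul_of_nonneg_left h2 h3
    have e2 : (1 + |x|) ^ m * Real.exp C₀ ≤ (1 + |x|) ^ m * Real.exp C₀ * (1 + |a| + |x|) ^ (m + 1) :=
      le_mul_of_one_le_right (by positivity) h1
    nlinarith
  calc (∫ y in Iic a, F y) ≤ ∫ y, H y := le_trans step1 step2
    _ ≤ (1 + |x|) ^ m * (Real.exp C₀ + (1 + |a| + |x|) ^ m * (|a| + |x|)) := step3
    _ ≤ (Real.exp C₀ + 1) * ((1 + |x|) ^ m * (1 + |a| + |x|) ^ (m + 1)) := step4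


noncomputable def theta (t : ℝ) : ℝ := if 0 ≤ t then 1 else 0

theorem stmt2 (m : ℕ) (κ₁ κ₂ : ℝ) (hκ₁ : 0 ≤ κ₁) (hκ₂ : 0 ≤ κ₂) :
    ∃ P : MvPolynomial (Fin 2) ℝ, (∀ d, 0 ≤ P.coeff d) ∧
      ∀ x₁ x₂ : ℝ,
        Integrable (fun y : ℝ =>
          |y| ^ m * Real.exp (κ₁ * (x₁ - y) + κ₂ * (y - x₂)
            - Real.exp (x₁ - y) - Real.exp (y - x₂))) ∧
        (∫ y : ℝ, |y| ^ m * Real.exp (κ₁ * (x₁ - y) + κ₂ * (y - x₂)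
            - Real.exp (x₁ - y) - Real.exp (y - x₂)))
          ≤ MvPolynomial.eval ![|x₁|, |x₂|] P *
            Real.exp (((κ₁ + κ₂) * (x₁ - x₂) / 2 - Real.exp ((x₁ - x₂) / 2)) * theta (x₁ - x₂)) := by
  classical
  obtain ⟨C₁, hC₁0, hC₁⟩ := oneSidedIic m κ₁ hκ₁
  obtain ⟨C₂, hC₂0, hC₂⟩ := oneSidedIci m κ₂ hκ₂
  set K : ℝ := (C₁ + C₂) * 2 ^ (m + 1) with hK
  have hKnn : 0 ≤ K := by positivity
  refine ⟨MvPolynomial.C K * (1 + MvPolynomial.X 0 + MvPolynomial.X 1) ^ (2 * m + 1), ?_, ?_⟩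
  · apply coeff_nonneg_mul
    · intro d
      rw [MvPolynomial.coeff_C]
      split <;> simp [hKnn]
    · apply coeff_nonneg_pow
      intro d
      simp only [MvPolynomial.coeff_add, MvPolynomial.coeff_one, MvPolynomial.coeff_X']
      split_ifs <;> norm_num
  intro x₁ x₂
  have hEval : MvPolynomial.eval ![|x₁|, |x₂|]
      (MvPolynomial.C K * (1 + MvPolynomial.X 0 + MvPolynomial.X 1) ^ (2 * m + 1))
      = K * (1 + (|x₁| + |x₂|)) ^ (2 * m + 1) := by
    simp only [map_mul, map_pow, map_add, map_one, MvPolynomial.eval_C, MvPolynomial.eval_X,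
      Matrix.cons_val_zero, Matrix.cons_val_one, Matrix.head_cons]
    ring
  set c : ℝ := (x₁ + x₂) / 2 with hc
  set A : ℝ := Real.exp (((κ₁ + κ₂) * (x₁ - x₂) / 2 - Real.exp ((x₁ - x₂) / 2)) * theta (x₁ - x₂))
    with hA
  set F₁ : ℝ → ℝ := fun y => |y| ^ m * Real.exp (κ₁ * (x₁ - y) - Real.exp (x₁ - y) / 2) with hF₁
  set F₂ : ℝ → ℝ := fun y => |y| ^ m * Real.exp (κ₂ * (y - x₂) - Real.exp (y - x₂) / 2) with hF₂
  set f : ℝ → ℝ := fun y : ℝ => |y| ^ m * Real.exp (κ₁ * (x₁ - y) + κ₂ * (y - x₂)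
    - Real.exp (x₁ - y) - Real.exp (y - x₂)) with hf
  obtain ⟨hI₁, hB₁⟩ := hC₁ c x₁
  obtain ⟨hI₂, hB₂'⟩ := hC₂ c x₂
  set g : ℝ → ℝ := fun y => A * (Set.indicator (Iic c) F₁ y + Set.indicator (Ioi c) F₂ y) with hg
  have hind1 : Integrable (Set.indicator (Iic c) F₁) := by
    rw [integrable_indicator_iff measurableSet_Iic]; exact hI₁
  have hind2 : Integrable (Set.indicator (Ioi c) F₂) := by
    rw [integrable_indicator_iff measurableSet_Ioi]
    exact hI₂.mono_set Ioi_subset_Ici_self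
  have hgInt : Integrable g := (hind1.add hind2).const_mul _
  have hfnn : ∀ y, 0 ≤ f y := fun y => by simp only [hf]; positivity
  have hamgm : ∀ y : ℝ, Real.exp ((x₁ - x₂) / 2) ≤
      Real.exp (x₁ - y) / 2 + Real.exp (y - x₂) / 2 := by
    intro y
    have h1 : Real.exp ((x₁ - y) / 2) * Real.exp ((y - x₂) / 2) = Real.exp ((x₁ - x₂) / 2) := by
      rw [← Real.exp_add]; ring_nf
    have h2 : Real.exp ((x₁ - y) / 2) * Real.exp ((x₁ - y) / 2) = Real.exp (x₁ - y) := by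
      rw [← Real.exp_add]; ring_nf
    have h3 : Real.exp ((y - x₂) / 2) * Real.exp ((y - x₂) / 2) = Real.exp (y - x₂) := by
      rw [← Real.exp_add]; ring_nf
    nlinarith [sq_nonneg (Real.exp ((x₁ - y) / 2) - Real.exp ((y - x₂) / 2))]
  have hfg : ∀ y, f y ≤ g y := by
    intro y
    rcases le_or_gt y c with hyc | hyc
    · -- left region
      have hq : y - x₂ ≤ (x₁ - x₂) / 2 := by
        have : y ≤ (x₁ + x₂) / 2 := hyc
        linarith
      have key : κ₁ * (x₁ - y) + κ₂ * (y - x₂) - Real.exp (x₁ - y) - Real.exp (y - x₂)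
          ≤ ((κ₁ + κ₂) * (x₁ - x₂) / 2 - Real.exp ((x₁ - x₂) / 2)) * theta (x₁ - x₂)
            + (κ₁ * (x₁ - y) - Real.exp (x₁ - y) / 2) := by
        unfold theta
        split_ifs with hs
        · rw [mul_one]
          have hκ₂q : κ₂ * (y - x₂) ≤ κ₂ * ((x₁ - x₂) / 2) :=
            mul_le_mul_of_nonneg_left hq hκ₂
          have hκ₁s : 0 ≤ κ₁ * ((x₁ - x₂) / 2) := mul_nonneg hκ₁ (by linarith)
          have := hamgm y
          have := (Real.exp_pos (y - x₂)).le
          nlinarith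
        · rw [mul_zero]
          push_neg at hs
          have hq0 : y - x₂ ≤ 0 := by linarith
          have hκ₂q : κ₂ * (y - x₂) ≤ 0 := mul_nonpos_of_nonneg_of_nonpos hκ₂ hq0
          have := (Real.exp_pos (x₁ - y)).le
          have := (Real.exp_pos (y - x₂)).le
          linarith
      have hgy : g y = A * F₁ y := by
        simp only [hg]
        rw [Set.indicator_of_mem (mem_Iic.mpr hyc),
          Set.indicator_of_notMem (by simp only [mem_Ioi, not_lt]; exact hyc), add_zero]
      rw [hgy]
      calc f y ≤ |y| ^ m * (A * Real.exp (κ₁ * (x₁ - y) - Real.exp (x₁ - y) / 2)) := by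
            simp only [hf]
            apply mul_le_mul_of_nonneg_left ?_ (by positivity)
            rw [hA, ← Real.exp_add]
            exact Real.exp_le_exp.mpr key
        _ = A * F₁ y := by simp only [hF₁]; ring
    · -- right region
      have hp : x₁ - y ≤ (x₁ - x₂) / 2 := by
        have : (x₁ + x₂) / 2 ≤ y := hyc.le
        linarith
      have key : κ₁ * (x₁ - y) + κ₂ * (y - x₂) - Real.exp (x₁ - y) - Real.exp (y - x₂)
          ≤ ((κ₁ + κ₂) * (x₁ - x₂) / 2 - Real.exp ((x₁ - x₂) / 2)) * theta (x₁ - x₂)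
            + (κ₂ * (y - x₂) - Real.exp (y - x₂) / 2) := by
        unfold theta
        split_ifs with hs
        · rw [mul_one]
          have hκ₁p : κ₁ * (x₁ - y) ≤ κ₁ * ((x₁ - x₂) / 2) :=
            mul_le_mul_of_nonneg_left hp hκ₁
          have hκ₂s : 0 ≤ κ₂ * ((x₁ - x₂) / 2) := mul_nonneg hκ₂ (by linarith)
          have := hamgm y
          have := (Real.exp_pos (x₁ - y)).le
          nlinarith
        · rw [mul_zero]
          push_neg at hs
          have hp0 : x₁ - y ≤ 0 := by linarith
          have hκ₁p : κ₁ * (x₁ - y) ≤ 0 := mul_nonpos_of_nonneg_of_nonpos hκ₁ hp0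
          have := (Real.exp_pos (x₁ - y)).le
          have := (Real.exp_pos (y - x₂)).le
          linarith
      have hgy : g y = A * F₂ y := by
        simp only [hg]
        rw [Set.indicator_of_notMem (by simp only [mem_Iic, not_le]; exact hyc),
          Set.indicator_of_mem (mem_Ioi.mpr hyc), zero_add]
      rw [hgy]
      calc f y ≤ |y| ^ m * (A * Real.exp (κ₂ * (y - x₂) - Real.exp (y - x₂) / 2)) := by
            simp only [hf]
            apply mul_le_mul_of_nonneg_left ?_ (by positivity)
            rw [hA, ← Real.exp_add]
            exact Real.exp_le_exp.mpr key
        _ = A * F₂ y := by simp only [hF₂]; ring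
  have hfmeas : AEStronglyMeasurable f volume := by
    apply Continuous.aestronglyMeasurable
    fun_prop
  have hfInt : Integrable f := by
    apply Integrable.mono' hgInt hfmeas
    filter_upwards with y
    rw [Real.norm_eq_abs, abs_of_nonneg (hfnn y)]
    exact hfg y
  refine ⟨hfInt, ?_⟩
  have hmono : (∫ y, f y) ≤ ∫ y, g y := integral_mono hfInt hgInt hfg
  have hgval : (∫ y, g y) = A * ((∫ y in Iic c, F₁ y) + ∫ y in Ioi c, F₂ y) := by
    simp only [hg]
    rw [integral_const_mul, integral_add hind1 hind2, integral_indicator measurableSet_Iic,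
      integral_indicator measurableSet_Ioi]
  have hB₂ : (∫ y in Ioi c, F₂ y) ≤ C₂ * ((1 + |x₂|) ^ m * (1 + |c| + |x₂|) ^ (m + 1)) := by
    rw [← integral_Ici_eq_integral_Ioi]
    exact hB₂'
  set S : ℝ := |x₁| + |x₂| with hS
  have hSnn : 0 ≤ S := by positivity
  have hcS : |c| ≤ S := by
    rw [hc, hS, abs_div, abs_two]
    have := abs_add_le x₁ x₂
    linarith [abs_nonneg x₁, abs_nonneg x₂]
  have hbound : ∀ (Ci : ℝ) (xi : ℝ), 0 ≤ Ci → |xi| ≤ S →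
      Ci * ((1 + |xi|) ^ m * (1 + |c| + |xi|) ^ (m + 1)) ≤ Ci * 2 ^ (m + 1) * (1 + S) ^ (2 * m + 1) := by
    intro Ci xi hCi hxi
    have h1 : (1 + |xi|) ^ m ≤ (1 + S) ^ m := pow_le_pow_left₀ (by positivity) (by linarith) m
    have h2 : (1 + |c| + |xi|) ^ (m + 1) ≤ (2 * (1 + S)) ^ (m + 1) := by
      apply pow_le_pow_left₀ (by positivity)
      linarith [abs_nonneg c, abs_nonneg xi]
    have h3 : (2 * (1 + S)) ^ (m + 1) = 2 ^ (m + 1) * (1 + S) ^ (m + 1) := mul_pow 2 (1 + S) (m + 1)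
    have h4 : (1 + |xi|) ^ m * (1 + |c| + |xi|) ^ (m + 1)
        ≤ (1 + S) ^ m * (2 ^ (m + 1) * (1 + S) ^ (m + 1)) := by
      apply mul_le_mul h1 (h3 ▸ h2) (by positivity) (by positivity)
    have h5 : (1 + S) ^ m * (2 ^ (m + 1) * (1 + S) ^ (m + 1))
        = 2 ^ (m + 1) * (1 + S) ^ (2 * m + 1) := by
      rw [show 2 * m + 1 = m + (m + 1) by ring, pow_add]
      ring
    calc Ci * ((1 + |xi|) ^ m * (1 + |c| + |xi|) ^ (m + 1))
        ≤ Ci * (2 ^ (m + 1) * (1 + S) ^ (2 * m + 1)) := by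
          apply mul_le_mul_of_nonneg_left (h5 ▸ h4) hCi
      _ = Ci * 2 ^ (m + 1) * (1 + S) ^ (2 * m + 1) := by ring
  have hsum : (∫ y in Iic c, F₁ y) + (∫ y in Ioi c, F₂ y) ≤ K * (1 + S) ^ (2 * m + 1) := by
    have e1 := hbound C₁ x₁ hC₁0 (by rw [hS]; linarith [abs_nonneg x₂])
    have e2 := hbound C₂ x₂ hC₂0 (by rw [hS]; linarith [abs_nonneg x₁])
    have := le_trans hB₁ e1
    have := le_trans hB₂ e2
    rw [hK]
    have expand : (C₁ + C₂) * 2 ^ (m + 1) * (1 + S) ^ (2 * m + 1)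
        = C₁ * 2 ^ (m + 1) * (1 + S) ^ (2 * m + 1) + C₂ * 2 ^ (m + 1) * (1 + S) ^ (2 * m + 1) := by
      ring
    rw [expand]
    linarith
  have hAnn : 0 ≤ A := (Real.exp_pos _).le
  calc (∫ y, f y) ≤ ∫ y, g y := hmono
    _ = A * ((∫ y in Iic c, F₁ y) + ∫ y in Ioi c, F₂ y) := hgval
    _ ≤ A * (K * (1 + S) ^ (2 * m + 1)) := mul_le_mul_of_nonneg_left hsum hAnn
    _ = MvPolynomial.eval ![|x₁|, |x₂|]
        (MvPolynomial.C K * (1 + MvPolynomial.X 0 + MvPolynomial.X 1) ^ (2 * m + 1)) * A := by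
      rw [hEval, hS]; ring
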